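/- (Completeness) Let Z, N_1, …, N_k be independent random variables on a probability space with laws P_Z and P_{N_1}, …, P_{N_k} respectively, taking values in standard Borel spaces 𝒵 and 𝒩_1, …, 𝒩_k, and let X_i := f_i(Z, N_i), where each f_i : 𝒵 × 𝒩_i → 𝒳_i is a measurable embedding (injective, measurable, with measurable inverse on its image) into a standard Borel space 𝒳_i; let P_{X_i} denote the law of X_i and P_X the joint law of (X_1, …, X_k). Then there exist autoencoders (E_i, D_i), i = 1,…,k, each optimal, such that for every i the joint measure Q^{(i)} — the pushforward of P_{X_i} ⊗ (⊗_{j≠i} P_{N_j}) under the map sending (x, (n_j)_{j≠i}) to the k-tuple with i-th coordinate x and j-th coordinate D_j(π^Z(E_i(x)), n_j) for j ≠ i — equals P_X. -/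

import Mathlib

open MeasureTheory

/-- Completeness: if `X_i := f_i(Z, N_i)` where `Z, N_1, …, N_k` are independent with laws
`P_Z, P_{N_i}` (independence and laws expressed by the joint law of `(Z, (N_i)_i)` being the
product `P_Z ⊗ (⊗_i P_{N_i})`) and each `f_i` is a measurable embedding, then there exist
optimal autoencoders `(E_i, D_i)` such that for every `i` the induced joint measure `Q^{(i)}` —
the pushforward of `P_{X_i} ⊗ (⊗_{j≠i} P_{N_j})` under
`(x, (n_j)_{j≠i}) ↦ (tuple with i-th coordinate x and j-th coordinate D_j(π^Z(E_i x), n_j))` —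
equals the joint law `P_X` of `(X_1, …, X_k)`. -/
lemma aux_measurable_combine {k : ℕ} (β : Fin k → Type*) [∀ j, MeasurableSpace (β j)]
    (i : Fin k) :
    Measurable (fun p : β i × (∀ j : {j : Fin k // j ≠ i}, β j) =>
      fun j : Fin k => if h : j = i then cast (congrArg β h.symm) p.1 else p.2 ⟨j, h⟩) := by
  apply measurable_pi_lambda
  intro j
  by_cases h : j = i
  · subst h
    simp only [dif_pos rfl, cast_eq]
    exact measurable_fst
  · simp only [dif_neg h]
    exact (measurable_pi_apply _).comp measurable_snd

lemma prod_map_combine {k : ℕ} (β : Fin k → Type*) [∀ j, MeasurableSpace (β j)]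
    (μ : ∀ j, Measure (β j)) [∀ j, IsProbabilityMeasure (μ j)] (i : Fin k) :
    ((μ i).prod (Measure.pi fun j : {j : Fin k // j ≠ i} => μ j)).map
      (fun p => fun j : Fin k => if h : j = i then cast (congrArg β h.symm) p.1 else p.2 ⟨j, h⟩)
      = Measure.pi μ := by
  classical
  refine (Measure.pi_eq fun s hs => ?_).symm
  rw [Measure.map_apply (aux_measurable_combine β i) (MeasurableSet.univ_pi hs)]
  have hpre : (fun p : β i × (∀ j : {j : Fin k // j ≠ i}, β j) =>
      fun j : Fin k => if h : j = i then cast (congrArg β h.symm) p.1 else p.2 ⟨j, h⟩) ⁻¹'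
      (Set.univ.pi s) = (s i) ×ˢ (Set.univ.pi fun j : {j : Fin k // j ≠ i} => s j) := by
    ext p
    simp only [Set.mem_preimage, Set.mem_pi, Set.mem_univ, forall_true_left, Set.mem_prod]
    constructor
    · intro h
      refine ⟨?_, fun j => ?_⟩
      · have := h i
        simpa using this
      · have := h j
        rw [dif_neg j.2] at this
        simpa using this
    · rintro ⟨h1, h2⟩ j
      by_cases hj : j = i
      · subst hj
        simpa using h1
      · rw [dif_neg hj]
        exact h2 ⟨j, hj⟩
  rw [hpre, Measure.prod_prod, Measure.pi_pi]
  rw [Fintype.prod_eq_mul_prod_compl i]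
  congr 1
  exact (Finset.prod_subtype {i}ᶜ (by simp) (fun j => μ j (s j))).symm

lemma pi_map_eval {k : ℕ} (β : Fin k → Type*) [∀ j, MeasurableSpace (β j)]
    (μ : ∀ j, Measure (β j)) [∀ j, IsProbabilityMeasure (μ j)] (i : Fin k) :
    (Measure.pi μ).map (Function.eval i) = μ i := by
  rw [← prod_map_combine β μ i,
    Measure.map_map (measurable_pi_apply i) (aux_measurable_combine β i)]
  have : (Function.eval i) ∘ (fun p : β i × (∀ j : {j : Fin k // j ≠ i}, β j) =>
      fun j : Fin k => if h : j = i then cast (congrArg β h.symm) p.1 else p.2 ⟨j, h⟩)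
      = Prod.fst := by
    funext p
    simp [Function.eval]
  rw [this, ← Measure.fst, Measure.fst_prod]

theorem completeness {k : ℕ}
    {Ω : Type*} [MeasurableSpace Ω] (P : Measure Ω) [IsProbabilityMeasure P]
    (Zsp : Type*) [MeasurableSpace Zsp] [StandardBorelSpace Zsp]
    (Nsp : Fin k → Type*) [∀ i, MeasurableSpace (Nsp i)] [∀ i, StandardBorelSpace (Nsp i)]
    (Xsp : Fin k → Type*) [∀ i, MeasurableSpace (Xsp i)] [∀ i, StandardBorelSpace (Xsp i)]
    (ζ : Ω → Zsp) (η : ∀ i, Ω → Nsp i)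
    (hζ : Measurable ζ) (hη : ∀ i, Measurable (η i))
    (PZ : Measure Zsp) [IsProbabilityMeasure PZ]
    (PN : ∀ i, Measure (Nsp i)) [∀ i, IsProbabilityMeasure (PN i)]
    (hPZ : P.map ζ = PZ) (hPN : ∀ i, P.map (η i) = PN i)
    (hindep : P.map (fun ω => (ζ ω, fun i => η i ω)) = PZ.prod (Measure.pi fun i => PN i))
    (f : ∀ i, Zsp × Nsp i → Xsp i) (hf : ∀ i, MeasurableEmbedding (f i)) :
    ∃ (E : ∀ i, Xsp i → Zsp × Nsp i) (D : ∀ i, Zsp × Nsp i → Xsp i),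
      (∀ i, Measurable (E i)) ∧ (∀ i, Measurable (D i)) ∧
      -- each autoencoder is optimal: zero reconstruction loss …
      (∀ i, ∀ᵐ x ∂(P.map fun ω => f i (ζ ω, η i ω)), D i (E i x) = x) ∧
      -- … and the encoded distribution matches the latent distribution
      (∀ i, (P.map fun ω => f i (ζ ω, η i ω)).map (E i) = PZ.prod (PN i)) ∧
      -- the induced joint measure Q^{(i)} recovers the true coupling P_X, for every i
      (∀ i : Fin k,
        Measure.map
          (fun p : Xsp i × (∀ j : {j : Fin k // j ≠ i}, Nsp j) =>
            fun j : Fin k =>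
              if h : j = i then cast (congrArg Xsp h.symm) p.1
              else D j ((E i p.1).1, p.2 ⟨j, h⟩))
          ((P.map fun ω => f i (ζ ω, η i ω)).prod
            (Measure.pi fun j : {j : Fin k // j ≠ i} => PN j))
        = P.map (fun ω => fun j : Fin k => f j (ζ ω, η j ω))) := by
  classical
  have hΩne : Nonempty Ω := by
    by_contra h
    rw [not_nonempty_iff] at h
    have h1 : P Set.univ = 1 := measure_univ
    rw [Set.univ_eq_empty_iff.mpr h] at h1
    simp at h1
  obtain ⟨ω₀⟩ := hΩne
  set E : ∀ i, Xsp i → Zsp × Nsp i :=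
    fun i => Function.extend (f i) id (fun _ => (ζ ω₀, η i ω₀)) with hEdef
  have hE : ∀ i, Measurable (E i) :=
    fun i => (hf i).measurable_extend measurable_id measurable_const
  have hEf : ∀ i, ∀ y, E i (f i y) = y := fun i y => (hf i).injective.extend_apply _ _ y
  have hXmeas : ∀ i, Measurable (fun ω => f i (ζ ω, η i ω)) :=
    fun i => (hf i).measurable.comp (hζ.prodMk (hη i))
  have hjoint : Measurable (fun ω => (ζ ω, fun j => η j ω)) :=
    hζ.prodMk (measurable_pi_lambda _ fun j => hη j)
  have hlaw : ∀ i, P.map (fun ω => (ζ ω, η i ω)) = PZ.prod (PN i) := by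
    intro i
    have hproj : Measurable (fun q : Zsp × (∀ j, Nsp j) => (q.1, q.2 i)) :=
      measurable_fst.prodMk ((measurable_pi_apply i).comp measurable_snd)
    calc P.map (fun ω => (ζ ω, η i ω))
        = (P.map (fun ω => (ζ ω, fun j => η j ω))).map
            (fun q : Zsp × (∀ j, Nsp j) => (q.1, q.2 i)) := by
          rw [Measure.map_map hproj hjoint]; rfl
      _ = (PZ.prod (Measure.pi fun j => PN j)).map (Prod.map id (Function.eval i)) := by
          rw [hindep]; rfl
      _ = (PZ.map id).prod ((Measure.pi fun j => PN j).map (Function.eval i)) :=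
          (Measure.map_prod_map _ _ measurable_id (measurable_pi_apply i)).symm
      _ = PZ.prod (PN i) := by rw [Measure.map_id, pi_map_eval]
  refine ⟨E, f, hE, fun i => (hf i).measurable, ?_, ?_, ?_⟩
  · -- reconstruction
    intro i
    have h1 : ∀ᵐ x ∂(P.map fun ω => f i (ζ ω, η i ω)), x ∈ Set.range (f i) := by
      exact (ae_map_iff (hXmeas i).aemeasurable (hf i).measurableSet_range).mpr
        (ae_of_all _ fun ω => ⟨_, rfl⟩)
    refine h1.mono fun x hx => ?_
    obtain ⟨y, rfl⟩ := hx
    rw [hEf i y]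
  · -- latent distribution
    intro i
    rw [Measure.map_map (hE i) (hXmeas i)]
    have : (E i) ∘ (fun ω => f i (ζ ω, η i ω)) = fun ω => (ζ ω, η i ω) :=
      funext fun ω => hEf i _
    rw [this, hlaw i]
  · -- joint recovery
    intro i
    have hXi : (P.map fun ω => f i (ζ ω, η i ω)) = (PZ.prod (PN i)).map (f i) := by
      rw [← hlaw i, Measure.map_map (hf i).measurable (hζ.prodMk (hη i))]
      rfl
    set Φ : Nsp i × (∀ j : {j : Fin k // j ≠ i}, Nsp j) → ∀ j, Nsp j :=
      fun p => fun j : Fin k =>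
        if h : j = i then cast (congrArg Nsp h.symm) p.1 else p.2 ⟨j, h⟩ with hΦdef
    have hΦ : Measurable Φ := aux_measurable_combine Nsp i
    set T : Xsp i × (∀ j : {j : Fin k // j ≠ i}, Nsp j) → ∀ j, Xsp j :=
      fun p => fun j : Fin k =>
        if h : j = i then cast (congrArg Xsp h.symm) p.1
        else f j ((E i p.1).1, p.2 ⟨j, h⟩) with hTdef
    have hT : Measurable T := by
      apply measurable_pi_lambda
      intro j
      by_cases h : j = i
      · subst h
        simp only [hTdef, dif_pos rfl, cast_eq]
        exact measurable_fst
      · simp only [hTdef, dif_neg h]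
        exact (hf j).measurable.comp
          ((measurable_fst.comp ((hE i).comp measurable_fst)).prodMk
            ((measurable_pi_apply _).comp measurable_snd))
    set G : Zsp × (∀ j, Nsp j) → ∀ j, Xsp j := fun q => fun j => f j (q.1, q.2 j) with hGdef
    have hG : Measurable G :=
      measurable_pi_lambda _ fun j =>
        (hf j).measurable.comp (measurable_fst.prodMk ((measurable_pi_apply j).comp measurable_snd))
    have hcomp : T ∘ (Prod.map (f i) id) = G ∘ ((Prod.map id Φ) ∘ (MeasurableEquiv.prodAssoc)) := by
      funext p
      funext j
      by_cases hj : j = i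
      · subst hj
        simp [hTdef, hGdef, hΦdef, hEf, MeasurableEquiv.prodAssoc, Equiv.prodAssoc]
      · simp [hTdef, hGdef, hΦdef, hj, hEf i p.1, MeasurableEquiv.prodAssoc, Equiv.prodAssoc]
    have hstep : ((PZ.prod (PN i)).prod
        (Measure.pi fun j : {j : Fin k // j ≠ i} => PN j)).map (Prod.map (f i) id)
        = ((PZ.prod (PN i)).map (f i)).prod
          (Measure.pi fun j : {j : Fin k // j ≠ i} => PN j) := by
      rw [← Measure.map_prod_map _ _ (hf i).measurable measurable_id, Measure.map_id]
    have hΦpi : ((PN i).prod (Measure.pi fun j : {j : Fin k // j ≠ i} => PN j)).map Φ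
        = Measure.pi fun j => PN j := by
      rw [hΦdef]; exact prod_map_combine Nsp PN i
    rw [hXi, ← hstep, Measure.map_map hT ((hf i).measurable.prodMap measurable_id), hcomp,
      ← Measure.map_map hG ((measurable_id.prodMap hΦ).comp MeasurableEquiv.prodAssoc.measurable),
      ← Measure.map_map (measurable_id.prodMap hΦ) MeasurableEquiv.prodAssoc.measurable,
      Measure.prodAssoc_prod, ← Measure.map_prod_map _ _ measurable_id hΦ, Measure.map_id,
      hΦpi, ← hindep, Measure.map_map hG hjoint]
    rfl
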